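/- Generalized fluctuation relation for the fully tilted operators (Theorem 'genfr'): For a matrix V with the same index set and an antisymmetric r : Fin n → Fin n → ℝ (r i j = −r j i), let T V r be the fully tilted operator with (T V r) i j = V i j * Real.exp (−r i j) for i ≠ j and (T V r) i i = V i i. Let 𝒬 be the antisymmetric matrix with 𝒬 i_μ j_μ = Q μ and 𝒬 j_μ i_μ = −Q μ for every μ, and 𝒬 i j = 0 for all other pairs. Then for every antisymmetric q : Fin n → Fin n → ℝ one has T W (𝒬 − q) = P * (T W̃ q)ᵀ * P⁻¹, where W̃ := P * (M Q)ᵀ * P⁻¹ is the hidden time-reversal generator. -/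

import Mathlib

open Matrix

/-- Generalized fluctuation relation for the fully tilted operators (Theorem "genfr"). -/
theorem generalized_FR_tilted {n m : ℕ}
    (W Whid : Matrix (Fin n) (Fin n) ℝ)
    (hW1 : ∀ i j, i ≠ j → 0 ≤ W i j)
    (hW2 : ∀ j, ∑ i, W i j = 0)
    (ei ej : Fin m → Fin n)
    (hij : ∀ μ, ei μ ≠ ej μ)
    (hdist : ∀ μ ν, μ ≠ ν → ({ei μ, ej μ} : Finset (Fin n)) ≠ {ei ν, ej ν})
    (hpos1 : ∀ μ, 0 < W (ei μ) (ej μ))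
    (hpos2 : ∀ μ, 0 < W (ej μ) (ei μ))
    (hH1 : ∀ μ, Whid (ei μ) (ej μ) = 0)
    (hH2 : ∀ μ, Whid (ej μ) (ei μ) = 0)
    (hH3 : ∀ i, Whid i i = W i i
        + ∑ μ ∈ Finset.univ.filter (fun μ => ej μ = i), W (ei μ) (ej μ)
        + ∑ μ ∈ Finset.univ.filter (fun μ => ei μ = i), W (ej μ) (ei μ))
    (hH4 : ∀ i j, i ≠ j →
      (∀ μ, ¬(i = ei μ ∧ j = ej μ) ∧ ¬(i = ej μ ∧ j = ei μ)) → Whid i j = W i j)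
    (p : Fin n → ℝ) (hp1 : ∀ i, 0 < p i) (hp2 : ∑ i, p i = 1)
    (hp3 : Whid *ᵥ p = 0)
    (Q : Fin m → ℝ)
    (hQ : ∀ μ, Q μ = Real.log (W (ei μ) (ej μ) * p (ej μ) / (W (ej μ) (ei μ) * p (ei μ))))
    (M : (Fin m → ℝ) → Matrix (Fin n) (Fin n) ℝ)
    (hM1 : ∀ q μ, M q (ei μ) (ej μ) = W (ei μ) (ej μ) * Real.exp (-q μ))
    (hM2 : ∀ q μ, M q (ej μ) (ei μ) = W (ej μ) (ei μ) * Real.exp (q μ))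
    (hM3 : ∀ q i j, (∀ μ, ¬(i = ei μ ∧ j = ej μ) ∧ ¬(i = ej μ ∧ j = ei μ)) → M q i j = W i j)
    (T : Matrix (Fin n) (Fin n) ℝ → (Fin n → Fin n → ℝ) → Matrix (Fin n) (Fin n) ℝ)
    (hT : ∀ V r i j, T V r i j = if i = j then V i j else V i j * Real.exp (-r i j))
    (QM : Matrix (Fin n) (Fin n) ℝ)
    (hQM1 : ∀ μ, QM (ei μ) (ej μ) = Q μ)
    (hQM2 : ∀ μ, QM (ej μ) (ei μ) = -Q μ)
    (hQM3 : ∀ i j, (∀ μ, ¬(i = ei μ ∧ j = ej μ) ∧ ¬(i = ej μ ∧ j = ei μ)) → QM i j = 0) :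
    ∀ q : Fin n → Fin n → ℝ, (∀ i j, q i j = -q j i) →
      T W (fun i j => QM i j - q i j)
        = Matrix.diagonal p
          * (T (Matrix.diagonal p * (M Q)ᵀ * (Matrix.diagonal p)⁻¹) q)ᵀ
          * (Matrix.diagonal p)⁻¹ := by
  intro q hq
  have hinv : (Matrix.diagonal p)⁻¹ = Matrix.diagonal fun i => (p i)⁻¹ := by
    apply Matrix.inv_eq_right_inv
    rw [Matrix.diagonal_mul_diagonal, ← Matrix.diagonal_one]
    have : (fun i => p i * (p i)⁻¹) = fun _ : Fin n => (1 : ℝ) :=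
      funext fun i => mul_inv_cancel₀ (hp1 i).ne'
    rw [this]
  ext i j
  rw [hinv]
  simp only [Matrix.mul_diagonal, Matrix.diagonal_mul, Matrix.transpose_apply, hT]
  by_cases hd : i = j
  · subst hd
    have hM : M Q i i = W i i := hM3 Q i i (fun μ =>
      ⟨fun ⟨h1, h2⟩ => hij μ (h1 ▸ h2 ▸ rfl), fun ⟨h1, h2⟩ => hij μ (h2 ▸ h1 ▸ rfl)⟩)
    simp only [if_pos rfl, hM, ↓reduceIte]
    have hpi := (hp1 i).ne'
    field_simp
  · have hd' : j ≠ i := fun h => hd h.symm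
    simp only [if_neg hd, if_neg hd', Matrix.mul_diagonal, Matrix.diagonal_mul,
      Matrix.transpose_apply]
    have key : W i j * Real.exp (-QM i j) = M Q i j := by
      by_cases h1 : ∃ μ, i = ei μ ∧ j = ej μ
      · obtain ⟨μ, hi, hj⟩ := h1
        subst hi; subst hj
        rw [hQM1, hM1]
      · by_cases h2 : ∃ μ, i = ej μ ∧ j = ei μ
        · obtain ⟨μ, hi, hj⟩ := h2
          subst hi; subst hj
          rw [hQM2, hM2, neg_neg]
        · push_neg at h1 h2
          have hcond : ∀ μ, ¬(i = ei μ ∧ j = ej μ) ∧ ¬(i = ej μ ∧ j = ei μ) := fun μ =>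
            ⟨fun ⟨a, b⟩ => (h1 μ a) b, fun ⟨a, b⟩ => (h2 μ a) b⟩
          rw [hQM3 i j hcond, hM3 Q i j hcond]
          simp
    have : W i j * Real.exp (-(QM i j - q i j))
        = (W i j * Real.exp (-QM i j)) * Real.exp (q i j) := by
      rw [neg_sub, sub_eq_neg_add, Real.exp_add]; ring
    rw [this, key, hq j i]
    have hpi := (hp1 i).ne'
    have hpj := (hp1 j).ne'
    field_simp
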